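/- Let G be a finite simple graph with vertex set V, let a ≥ 0 be an integer, let S₀ ⊆ V be such that G[S₀] is connected with diameter D₀ in G[S₀], let B := {v ∈ V : dist_G(v, S₀) ≤ a}, and let S ⊇ B be a vertex set. Then any shortest path P in G[S] between two vertices of S contains at most D₀ + 2a + 1 vertices of B. -/

import Mathlib

open Finset

/-- The subgraph of `G` induced by the vertex set `S`, viewed as a graph on all of `V`
(vertices outside `S` are isolated). Distances between vertices of `S` in this graph agree
with distances in the induced subgraph `G[S]`. -/
def SimpleGraph.restrictS {V : Type*} (G : SimpleGraph V) (S : Set V) : SimpleGraph V where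
  Adj u v := u ∈ S ∧ v ∈ S ∧ G.Adj u v
  symm := ⟨fun _ _ ⟨hu, hv, h⟩ => ⟨hv, hu, h.symm⟩⟩
  loopless := ⟨fun u ⟨_, _, h⟩ => G.ne_of_adj h rfl⟩

namespace SimpleGraph.Walk

variable {V : Type*} {G : SimpleGraph V}

lemma exists_walk_take' {x y : V} (p : G.Walk x y) (n : ℕ) (hn : n ≤ p.length) :
    ∃ q : G.Walk x (p.getVert n), q.length = n := by
  induction p generalizing n with
  | nil =>
    simp only [length_nil, Nat.le_zero] at hn
    subst hn
    exact ⟨Walk.nil, rfl⟩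
  | cons h p ih =>
    cases n with
    | zero => exact ⟨Walk.nil.copy rfl (by simp [getVert_zero]), by simp⟩
    | succ n =>
      obtain ⟨q, hq⟩ := ih n (by simpa using hn)
      exact ⟨(q.cons h).copy rfl (by simp [getVert_cons_succ]), by simp [hq]⟩

lemma exists_walk_drop' {x y : V} (p : G.Walk x y) (n : ℕ) :
    ∃ q : G.Walk (p.getVert n) y, q.length = p.length - n := by
  induction p generalizing n with
  | nil => exact ⟨Walk.nil.copy (by simp [getVert_of_length_le]) rfl, by simp⟩
  | cons h p ih =>
    cases n with
    | zero => exact ⟨(p.cons h).copy (by simp [getVert_zero]) rfl, by simp⟩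
    | succ n =>
      obtain ⟨q, hq⟩ := ih n
      exact ⟨q.copy (by simp [getVert_cons_succ]) rfl, by simp [hq]⟩

lemma exists_lift_restrictS' {S : Set V} {x y : V} (p : G.Walk x y)
    (hsupp : ∀ z ∈ p.support, z ∈ S) :
    ∃ q : (G.restrictS S).Walk x y, q.length = p.length := by
  induction p with
  | nil => exact ⟨Walk.nil, rfl⟩
  | @cons u v w h p ih =>
    obtain ⟨q, hq⟩ := ih (fun z hz => hsupp z (by simp [hz]))
    exact ⟨q.cons ⟨hsupp u (by simp), hsupp v (by simp), h⟩, congrArg (· + 1) hq⟩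

end SimpleGraph.Walk

/-- Let `a ≥ 0`, let `S₀ ⊆ V` induce a connected subgraph of diameter at
most `D₀`, let `B := {v : dist_G(v, S₀) ≤ a}`, and let `S ⊇ B`. Then any shortest path `P`
in `G[S]` between two vertices of `S` contains at most `D₀ + 2a + 1` vertices of `B`. -/
theorem shortest_path_few_vertices_near_connected_set
    {V : Type*} [Fintype V] [DecidableEq V] (G : SimpleGraph V)
    (a : ℕ) (S₀ : Set V) (hS₀ne : S₀.Nonempty)
    (hS₀conn : ∀ u ∈ S₀, ∀ v ∈ S₀, (G.restrictS S₀).Reachable u v)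
    (D₀ : ℕ) (hD₀ : ∀ u ∈ S₀, ∀ v ∈ S₀, (G.restrictS S₀).edist u v ≤ (D₀ : ℕ∞))
    (B : Finset V) (hB : ∀ v, v ∈ B ↔ ∃ w ∈ S₀, G.edist v w ≤ (a : ℕ∞))
    (S : Set V) (hBS : ↑B ⊆ S)
    (x y : V) (hx : x ∈ S) (hy : y ∈ S)
    (p : (G.restrictS S).Walk x y) (hpath : p.IsPath)
    (hshortest : p.length = (G.restrictS S).dist x y) :
    (p.support.filter (fun z => z ∈ B)).length ≤ D₀ + 2 * a + 1 := by
  classical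
  -- S₀ ⊆ B
  have hS₀B : ∀ v ∈ S₀, v ∈ B := fun v hv =>
    (hB v).mpr ⟨v, hv, by simp⟩
  -- every vertex of B reaches S₀ within the restricted graph by a short walk
  have hBnear : ∀ u ∈ B, ∃ w ∈ S₀, (G.restrictS S).edist u w ≤ (a : ℕ∞) := by
    intro u hu
    obtain ⟨w, hwS₀, hw⟩ := (hB u).mp hu
    have hne : G.edist u w ≠ ⊤ := fun h => by simp [h] at hw
    obtain ⟨W, hW⟩ := SimpleGraph.exists_walk_of_edist_ne_top hne
    have hWlen : W.length ≤ a := by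
      have : (W.length : ℕ∞) ≤ (a : ℕ∞) := hW ▸ hw
      exact_mod_cast this
    have hsupp : ∀ z ∈ W.support, z ∈ S := by
      intro z hz
      obtain ⟨n, hn, hnle⟩ := SimpleGraph.Walk.mem_support_iff_exists_getVert.mp hz
      obtain ⟨q, hq⟩ := W.exists_walk_drop' n
      have hzB : z ∈ B := by
        refine (hB z).mpr ⟨w, hwS₀, ?_⟩
        calc G.edist z w ≤ (q.copy hn rfl).length := (q.copy hn rfl).edist_le
          _ ≤ (a : ℕ∞) := by
            simp only [SimpleGraph.Walk.length_copy, hq]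
            exact_mod_cast le_trans (Nat.sub_le _ _) hWlen
      exact hBS hzB
    obtain ⟨q, hq⟩ := W.exists_lift_restrictS' hsupp
    refine ⟨w, hwS₀, ?_⟩
    calc (G.restrictS S).edist u w ≤ q.length := q.edist_le
      _ ≤ (a : ℕ∞) := by rw [hq]; exact_mod_cast hWlen
  -- any two vertices of B are joined in restrictS S by a walk of length ≤ D₀ + 2a
  have hBB : ∀ u ∈ B, ∀ v ∈ B, ∃ w : (G.restrictS S).Walk u v, w.length ≤ D₀ + 2 * a := by
    intro u hu v hv
    obtain ⟨wu, hwuS₀, hwu⟩ := hBnear u hu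
    obtain ⟨wv, hwvS₀, hwv⟩ := hBnear v hv
    have hmono : G.restrictS S₀ ≤ G.restrictS S := by
      intro z z' hzz'
      exact ⟨hBS (hS₀B _ hzz'.1), hBS (hS₀B _ hzz'.2.1), hzz'.2.2⟩
    have hmid : (G.restrictS S).edist wu wv ≤ (D₀ : ℕ∞) :=
      le_trans (SimpleGraph.edist_anti hmono) (hD₀ wu hwuS₀ wv hwvS₀)
    have htri : (G.restrictS S).edist u v ≤ ((D₀ + 2 * a : ℕ) : ℕ∞) := by
      calc (G.restrictS S).edist u v
          ≤ (G.restrictS S).edist u wu + (G.restrictS S).edist wu v :=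
            SimpleGraph.edist_triangle
        _ ≤ (G.restrictS S).edist u wu +
            ((G.restrictS S).edist wu wv + (G.restrictS S).edist wv v) := by
            gcongr
            · exact SimpleGraph.edist_triangle
        _ ≤ (a : ℕ∞) + ((D₀ : ℕ∞) + ((a : ℕ∞))) := by
            gcongr
            rw [SimpleGraph.edist_comm]
            exact hwv
        _ = ((D₀ + 2 * a : ℕ) : ℕ∞) := by push_cast; ring
    have hne : (G.restrictS S).edist u v ≠ ⊤ :=
      fun h => ENat.coe_ne_top (D₀ + 2 * a) (top_le_iff.mp (h ▸ htri))
    obtain ⟨w, hw⟩ := SimpleGraph.exists_walk_of_edist_ne_top hne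
    refine ⟨w, ?_⟩
    have : (w.length : ℕ∞) ≤ ((D₀ + 2 * a : ℕ) : ℕ∞) := hw ▸ htri
    exact_mod_cast this
  -- key index bound
  have key : ∀ i j : ℕ, i ≤ j → j ≤ p.length → p.getVert i ∈ B → p.getVert j ∈ B →
      j ≤ i + (D₀ + 2 * a) := by
    intro i j hij hj hiB hjB
    obtain ⟨q1, hq1⟩ := p.exists_walk_take' i (le_trans hij hj)
    obtain ⟨q2, hq2⟩ := p.exists_walk_drop' j
    obtain ⟨w, hw⟩ := hBB _ hiB _ hjB
    have hd : (G.restrictS S).dist x y ≤ (q1.append (w.append q2)).length :=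
      SimpleGraph.dist_le _
    rw [← hshortest] at hd
    simp only [SimpleGraph.Walk.length_append, hq1, hq2] at hd
    omega
  -- counting
  set L := p.support.filter (fun z => z ∈ B) with hL
  have hLnd : L.Nodup := hpath.support_nodup.filter _
  have hcard : L.length = L.toFinset.card := (List.toFinset_card_of_nodup hLnd).symm
  set F : Finset ℕ := (Finset.range (p.length + 1)).filter (fun i => p.getVert i ∈ B) with hF
  have hsurj : Set.SurjOn (fun i => p.getVert i) ↑F ↑L.toFinset := by
    intro z hz
    simp only [Finset.coe_sort_coe, List.coe_toFinset, Set.mem_setOf_eq] at hz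
    have hz' : z ∈ p.support ∧ z ∈ B := by
      have := List.mem_filter.mp (hL ▸ hz)
      exact ⟨this.1, by simpa using this.2⟩
    obtain ⟨n, hn, hnle⟩ := SimpleGraph.Walk.mem_support_iff_exists_getVert.mp hz'.1
    refine ⟨n, ?_, hn⟩
    simp only [hF, Finset.coe_filter, Finset.mem_range, Set.mem_setOf_eq]
    exact ⟨Nat.lt_succ_of_le hnle, hn ▸ hz'.2⟩
  have hcard2 : L.toFinset.card ≤ F.card :=
    Finset.card_le_card_of_surjOn _ hsurj
  have hFcard : F.card ≤ D₀ + 2 * a + 1 := by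
    rcases F.eq_empty_or_nonempty with hFe | hFne
    · simp [hFe]
    · set m := F.min' hFne with hm
      have hsub : F ⊆ Finset.Icc m (m + (D₀ + 2 * a)) := by
        intro i hi
        have h1 : m ≤ i := F.min'_le i hi
        have hmF := F.min'_mem hFne
        simp only [hF, Finset.mem_filter, Finset.mem_range] at hi hmF
        have h2 : i ≤ m + (D₀ + 2 * a) :=
          key m i h1 (Nat.lt_succ_iff.mp hi.1) hmF.2 hi.2
        exact Finset.mem_Icc.mpr ⟨h1, h2⟩
      calc F.card ≤ (Finset.Icc m (m + (D₀ + 2 * a))).card := Finset.card_le_card hsub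
        _ = D₀ + 2 * a + 1 := by rw [Nat.card_Icc]; omega
  omega
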